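/- Let g ∈ L²(0,1) with G(x) = ∫₀ˣ g(t) dt satisfying G(1) = 0, and suppose ∫₀¹ g(x) [ (1/z) cos(z(2x-1)) - sin(z(2x-1)) ] dx = 0 for all z ∈ ℂ \ {0}. Then the function 2G(x) - g(x) is even with respect to x = 1/2 (in the distributional sense). -/

import Mathlib

open MeasureTheory Set

private lemma key_swap (g : ℝ → ℝ) (hg : IntegrableOn (fun t => (g t : ℂ)) (Ioc (0:ℝ) 1) volume)
    (S : ℝ → ℂ) (hS : Continuous S) :
    ∫ t in (0:ℝ)..1, (g t : ℂ) * (∫ x in t..(1:ℝ), S x) =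
      ∫ x in (0:ℝ)..1, (∫ t in (0:ℝ)..x, (g t : ℂ)) * S x := by
  set μ := volume.restrict (Ioc (0:ℝ) 1) with hμ
  have hSint : Integrable S μ := (hS.integrableOn_Icc).mono_set Ioc_subset_Icc_self
  have hprod : Integrable (fun p : ℝ × ℝ => (g p.1 : ℂ) * S p.2) (μ.prod μ) :=
    Integrable.mul_prod hg hSint
  have hsetm : MeasurableSet {p : ℝ × ℝ | p.1 < p.2} :=
    measurableSet_lt measurable_fst measurable_snd
  have hΦ : Integrable ({p : ℝ × ℝ | p.1 < p.2}.indicator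
      (fun p => (g p.1 : ℂ) * S p.2)) (μ.prod μ) := hprod.indicator hsetm
  have swap := MeasureTheory.integral_integral_swap
    (f := fun t x => {p : ℝ × ℝ | p.1 < p.2}.indicator (fun p => (g p.1 : ℂ) * S p.2) (t, x)) hΦ
  have h1 : ∫ t in (0:ℝ)..1, (g t : ℂ) * (∫ x in t..(1:ℝ), S x)
      = ∫ t, (∫ x, ({p : ℝ × ℝ | p.1 < p.2}.indicator (fun p => (g p.1 : ℂ) * S p.2) (t, x)) ∂μ) ∂μ := by
    rw [intervalIntegral.integral_of_le zero_le_one]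
    refine integral_congr_ae ?_
    filter_upwards [ae_restrict_mem measurableSet_Ioc] with t ht
    have e1 : Ioi t ∩ Ioc (0:ℝ) 1 = Ioc t 1 := by
      ext y; simp only [mem_inter_iff, mem_Ioi, mem_Ioc]
      constructor
      · rintro ⟨h1, h2, h3⟩; exact ⟨h1, h3⟩
      · rintro ⟨h1, h2⟩; exact ⟨h1, ht.1.trans h1, h2⟩
    have e2 : ∫ x in t..(1:ℝ), S x = ∫ x, ({x : ℝ | t < x}.indicator S) x ∂μ := by
      rw [show {x : ℝ | t < x} = Ioi t from rfl, integral_indicator measurableSet_Ioi, hμ,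
        Measure.restrict_restrict measurableSet_Ioi, e1, intervalIntegral.integral_of_le ht.2]
    rw [e2, ← integral_const_mul]
    refine integral_congr_ae (Filter.Eventually.of_forall fun x => ?_)
    by_cases hlt : t < x <;>
      simp [Set.indicator_apply, hlt]
  have h2 : ∫ x in (0:ℝ)..1, (∫ t in (0:ℝ)..x, (g t : ℂ)) * S x
      = ∫ x, (∫ t, ({p : ℝ × ℝ | p.1 < p.2}.indicator (fun p => (g p.1 : ℂ) * S p.2) (t, x)) ∂μ) ∂μ := by
    rw [intervalIntegral.integral_of_le zero_le_one]
    refine integral_congr_ae ?_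
    filter_upwards [ae_restrict_mem measurableSet_Ioc] with x hx
    have hxne : ∀ᵐ t ∂μ, t ≠ x := by
      have hx0 : μ {x} = 0 := by
        rw [hμ, Measure.restrict_apply' measurableSet_Ioc]
        exact measure_mono_null inter_subset_left Real.volume_singleton
      refine ae_iff.2 ?_
      convert hx0 using 2
      ext t; simp
    have e2 : (∫ t in (0:ℝ)..x, (g t : ℂ)) = ∫ t, ({t : ℝ | t < x}.indicator (fun t => (g t : ℂ))) t ∂μ := by
      have e1 : Iio x ∩ Ioc (0:ℝ) 1 = Ioo 0 x := by
        ext t; simp only [mem_inter_iff, mem_Iio, mem_Ioc, mem_Ioo]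
        constructor
        · rintro ⟨h1, h2, h3⟩; exact ⟨h2, h1⟩
        · rintro ⟨h1, h2⟩; exact ⟨h2, h1, (h2.le.trans hx.2)⟩
      rw [show {t : ℝ | t < x} = Iio x from rfl, integral_indicator measurableSet_Iio, hμ,
        Measure.restrict_restrict measurableSet_Iio, e1, intervalIntegral.integral_of_le hx.1.le,
        MeasureTheory.integral_Ioc_eq_integral_Ioo]
    rw [e2, ← integral_mul_const]
    refine integral_congr_ae ?_
    filter_upwards [hxne] with t htx
    by_cases hlt : t < x <;>
      simp [Set.indicator_apply, hlt]
  rw [h1, swap, ← h2]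

private lemma stepA' (g G : ℝ → ℝ) (hgI : IntervalIntegrable g volume 0 1)
    (hG : ∀ x, G x = ∫ t in (0:ℝ)..x, g t) (hG1 : G 1 = 0)
    (hGc : ContinuousOn G (Icc 0 1))
    (h : ∀ z : ℂ, z ≠ 0 →
      ∫ x in (0:ℝ)..1,
        (g x : ℂ) * ((1 / z) * Complex.cos (z * (2 * x - 1))
          - Complex.sin (z * (2 * x - 1))) = 0) (c : ℝ) :
    ∫ x in (0:ℝ)..1, (2 * G x - g x) * Real.sin (c * (2 * x - 1)) = 0 := by
  rcases eq_or_ne c 0 with rfl | hc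
  · simp
  set z : ℂ := (c : ℂ) with hzdef
  have hz : z ≠ 0 := Complex.ofReal_ne_zero.2 hc
  have h2z : (2 : ℂ) * z ≠ 0 := by simp [hz]
  set S : ℝ → ℂ := fun x => Complex.sin (z * (2 * (x:ℂ) - 1)) with hSdef
  have hScont : Continuous S := by
    apply Complex.continuous_sin.comp
    fun_prop
  have hCcont : Continuous (fun x : ℝ => Complex.cos (z * (2 * (x:ℂ) - 1))) := by
    apply Complex.continuous_cos.comp
    fun_prop
  -- derivative fact
  have hasD : ∀ x : ℝ, HasDerivAt (fun y : ℝ => -Complex.cos (z * (2 * (y:ℂ) - 1)) / (2 * z))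
      (S x) x := by
    intro x
    have hinner : HasDerivAt (fun w : ℂ => z * (2 * w - 1)) (2 * z) (x:ℂ) := by
      simpa [mul_comm] using (((hasDerivAt_id (x:ℂ)).const_mul (2:ℂ)).sub_const 1).const_mul z
    have hcos : HasDerivAt (fun w : ℂ => Complex.cos (z * (2 * w - 1)))
        (-Complex.sin (z * (2 * (x:ℂ) - 1)) * (2 * z)) (x:ℂ) :=
      (Complex.hasDerivAt_cos _).comp _ hinner
    have h2 := ((hcos.comp_ofReal).neg).div_const (2 * z)
    rw [show S x = -(-Complex.sin (z * (2 * (x:ℂ) - 1)) * (2 * z)) / (2 * z) by field_simp; rfl]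
    exact h2
  have fund : ∀ t : ℝ, ∫ x in t..(1:ℝ), S x
      = (Complex.cos (z * (2 * (t:ℂ) - 1)) - Complex.cos z) / (2 * z) := by
    intro t
    rw [intervalIntegral.integral_eq_sub_of_hasDerivAt (fun x _ => hasD x)
      (hScont.intervalIntegrable t 1)]
    have : z * (2 * ((1:ℝ):ℂ) - 1) = z := by push_cast; ring
    rw [this]
    ring
  have hgOn : IntegrableOn (fun t => (g t : ℂ)) (Ioc (0:ℝ) 1) volume := by
    have := intervalIntegrable_iff.mp hgI
    rw [uIoc_of_le zero_le_one] at this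
    exact this.ofReal
  have hgIc : IntervalIntegrable (fun t => (g t : ℂ)) volume 0 1 := by
    rw [intervalIntegrable_iff, uIoc_of_le zero_le_one]; exact hgOn
  have key := key_swap g hgOn S hScont
  -- rewrite LHS of key using fund
  simp only [fund] at key
  -- rewrite RHS of key using hG
  have hGof : ∀ x : ℝ, (∫ t in (0:ℝ)..x, (g t : ℂ)) = ((G x : ℝ) : ℂ) := by
    intro x
    rw [hG x, ← intervalIntegral.integral_ofReal]
  simp only [hGof] at key
  -- Now: ∫ t in 0..1, g t * ((cos(z(2t-1)) - cos z)/(2z)) = ∫ x in 0..1, (G x : ℂ) * S x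
  -- expand the LHS
  have hgc1 : IntervalIntegrable (fun t : ℝ => (g t : ℂ) * Complex.cos (z * (2 * (t:ℂ) - 1)))
      volume 0 1 := hgIc.mul_continuousOn hCcont.continuousOn
  have hint0 : (∫ t in (0:ℝ)..1, (g t : ℂ)) = 0 := by
    rw [intervalIntegral.integral_ofReal, ← hG 1, hG1, Complex.ofReal_zero]
  have expand : ∫ t in (0:ℝ)..1, (g t : ℂ) * ((Complex.cos (z * (2 * (t:ℂ) - 1)) - Complex.cos z) / (2 * z))
      = (1/(2*z)) * (∫ t in (0:ℝ)..1, (g t : ℂ) * Complex.cos (z * (2 * (t:ℂ) - 1)))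
        - (Complex.cos z/(2*z)) * (∫ t in (0:ℝ)..1, (g t : ℂ)) := by
    have e : (fun t : ℝ => (g t : ℂ) * ((Complex.cos (z * (2 * (t:ℂ) - 1)) - Complex.cos z) / (2 * z)))
        = (fun t : ℝ => (1/(2*z)) * ((g t : ℂ) * Complex.cos (z * (2 * (t:ℂ) - 1)))
            - (Complex.cos z/(2*z)) * (g t : ℂ)) := by
      funext t; field_simp
    rw [e, intervalIntegral.integral_sub (hgc1.const_mul _) (hgIc.const_mul _),
      intervalIntegral.integral_const_mul, intervalIntegral.integral_const_mul]
  rw [expand, hint0, mul_zero, sub_zero] at key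
  -- key : (1/(2z)) * ∫ g cos = ∫ (G x : ℂ) * S x
  -- hypothesis
  have hh := h z hz
  have hgS : IntervalIntegrable (fun t : ℝ => (g t : ℂ) * S t) volume 0 1 :=
    hgIc.mul_continuousOn hScont.continuousOn
  have expand2 : ∫ x in (0:ℝ)..1, (g x : ℂ) * ((1 / z) * Complex.cos (z * (2 * (x:ℂ) - 1))
        - Complex.sin (z * (2 * (x:ℂ) - 1)))
      = (1/z) * (∫ t in (0:ℝ)..1, (g t : ℂ) * Complex.cos (z * (2 * (t:ℂ) - 1)))
        - (∫ t in (0:ℝ)..1, (g t : ℂ) * S t) := by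
    have e : (fun x : ℝ => (g x : ℂ) * ((1 / z) * Complex.cos (z * (2 * (x:ℂ) - 1))
          - Complex.sin (z * (2 * (x:ℂ) - 1))))
        = (fun t : ℝ => (1/z) * ((g t : ℂ) * Complex.cos (z * (2 * (t:ℂ) - 1))) - (g t : ℂ) * S t) := by
      funext t; simp only [hSdef]; ring
    rw [show (∫ x in (0:ℝ)..1, (g x : ℂ) * ((1 / z) * Complex.cos (z * (2 * (x:ℂ) - 1))
          - Complex.sin (z * (2 * (x:ℂ) - 1))))
        = ∫ t in (0:ℝ)..1, ((1/z) * ((g t : ℂ) * Complex.cos (z * (2 * (t:ℂ) - 1))) - (g t : ℂ) * S t)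
      from by rw [← e],
      intervalIntegral.integral_sub (hgc1.const_mul _) hgS, intervalIntegral.integral_const_mul]
  rw [expand2] at hh
  -- conclude complex version
  have hGS : IntervalIntegrable (fun x : ℝ => ((G x : ℝ):ℂ) * S x) volume 0 1 := by
    apply ContinuousOn.intervalIntegrable
    rw [uIcc_of_le zero_le_one]
    exact (Complex.continuous_ofReal.comp_continuousOn hGc).mul hScont.continuousOn
  have hcomplex : ∫ x in (0:ℝ)..1, ((2 * G x - g x : ℝ) : ℂ) * S x = 0 := by
    have e : ∀ x : ℝ, ((2 * G x - g x : ℝ) : ℂ) * S x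
        = 2 * (((G x : ℝ):ℂ) * S x) - (g x : ℂ) * S x := by
      intro x; push_cast; ring
    simp only [e]
    rw [intervalIntegral.integral_sub (hGS.const_mul 2) hgS, intervalIntegral.integral_const_mul,
      ← key]
    have e2 : (2:ℂ) * (1 / (2 * z) * (∫ t in (0:ℝ)..1, (g t : ℂ) * Complex.cos (z * (2 * (t:ℂ) - 1))))
        = (1/z) * (∫ t in (0:ℝ)..1, (g t : ℂ) * Complex.cos (z * (2 * (t:ℂ) - 1))) := by
      field_simp
    rw [e2]
    exact hh
  -- realize
  have : ∫ x in (0:ℝ)..1, (((2 * G x - g x) * Real.sin (c * (2 * x - 1)) : ℝ) : ℂ) = 0 := by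
    rw [← hcomplex]
    refine intervalIntegral.integral_congr fun x _ => ?_
    have e3 : Complex.sin (z * (2 * (x:ℂ) - 1)) = ((Real.sin (c * (2 * x - 1)) : ℝ) : ℂ) := by
      rw [Complex.ofReal_sin]; congr 1; push_cast; ring
    simp only [hSdef]
    rw [e3]; push_cast; ring
  rwa [intervalIntegral.integral_ofReal, Complex.ofReal_eq_zero] at this


private lemma ofReal_II {f : ℝ → ℝ} {a b : ℝ} (h : IntervalIntegrable f volume a b) :
    IntervalIntegrable (fun x => (f x : ℂ)) volume a b := by
  rw [intervalIntegrable_iff] at h ⊢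
  exact h.ofReal

private lemma fourierCoeff_toLp' {T : ℝ} [hT : Fact (0 < T)] (f : AddCircle T → ℂ)
    (hf : MemLp f 2 AddCircle.haarAddCircle) (n : ℤ) :
    fourierCoeff (⇑(hf.toLp f)) n = fourierCoeff f n :=
  integral_congr_ae (by
    filter_upwards [hf.coeFn_toLp] with t ht
    rw [ht])

private lemma fourier_vanish (H : ℝ → ℝ)
    (hH2 : MemLp H 2 (volume.restrict (Ioc (0:ℝ) 1)))
    (hHI : IntervalIntegrable H volume 0 1)
    (hcos : ∀ n : ℤ, ∫ x in (0:ℝ)..1, H x * Real.cos (2 * Real.pi * n * x) = 0)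
    (hsin : ∀ n : ℤ, ∫ x in (0:ℝ)..1, H x * Real.sin (2 * Real.pi * n * x) = 0) :
    ∀ᵐ x ∂(volume.restrict (Ioc (0:ℝ) 1)), H x = 0 := by
  haveI : Fact ((0:ℝ) < 1) := ⟨one_pos⟩
  set μ := volume.restrict (Ioc (0:ℝ) 1) with hμdef
  -- key computation: complex fourier integrals of H vanish
  have hkey : ∀ n : ℤ, (∫ x in (0:ℝ)..1, (fourier (-n) (x : AddCircle (1:ℝ))) • ((H x : ℝ) : ℂ)) = 0 := by
    intro n
    have e : ∀ x : ℝ, (fourier (-n) (x : AddCircle (1:ℝ))) • ((H x : ℝ) : ℂ)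
        = ((H x * Real.cos (2 * Real.pi * n * x) : ℝ) : ℂ)
          - ((H x * Real.sin (2 * Real.pi * n * x) : ℝ) : ℂ) * Complex.I := by
      intro x
      rw [fourier_coe_apply]
      have e1 : 2 * Real.pi * Complex.I * (-n : ℤ) * (x:ℝ) / (1:ℝ)
          = ((-(2 * Real.pi * n * x) : ℝ) : ℂ) * Complex.I := by
        push_cast; ring
      rw [e1, Complex.exp_mul_I, smul_eq_mul]
      rw [← Complex.ofReal_cos, ← Complex.ofReal_sin, Real.cos_neg, Real.sin_neg]
      push_cast; ring
    rw [intervalIntegral.integral_congr fun x _ => e x]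
    have hccont : Continuous (fun x : ℝ => Real.cos (2 * Real.pi * n * x)) := by fun_prop
    have hscont : Continuous (fun x : ℝ => Real.sin (2 * Real.pi * n * x)) := by fun_prop
    have i1 := ofReal_II (hHI.mul_continuousOn hccont.continuousOn)
    have i2 := (ofReal_II (hHI.mul_continuousOn hscont.continuousOn)).mul_const Complex.I
    rw [intervalIntegral.integral_sub i1 i2, intervalIntegral.integral_mul_const,
      intervalIntegral.integral_ofReal, intervalIntegral.integral_ofReal, hcos n, hsin n]
    simp
  -- measurable representative
  have hsm := hH2.aestronglyMeasurable
  set H' : ℝ → ℝ := hsm.mk H with hH'def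
  have hH'm : StronglyMeasurable H' := hsm.stronglyMeasurable_mk
  have hae : H =ᵐ[μ] H' := hsm.ae_eq_mk
  have hH'2 : MemLp H' 2 μ := hH2.ae_eq hae
  set Hc : ℝ → ℂ := fun x => (H' x : ℂ) with hHcdef
  have hHcm : Measurable Hc := Complex.measurable_ofReal.comp hH'm.measurable
  have hHc2 : MemLp Hc 2 μ := hH'2.ofReal
  set f : AddCircle (1:ℝ) → ℂ := AddCircle.liftIoc 1 0 Hc with hfdef
  have hfm : Measurable f := by
    have h1 : Measurable ((Ioc (0:ℝ) (0+1)).restrict Hc) := hHcm.comp measurable_subtype_coe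
    exact h1.comp (AddCircle.measurableEquivIoc (T := 1) 0).measurable
  have hmk : MeasurePreserving ((↑) : ℝ → AddCircle (1:ℝ)) (volume.restrict (Ioc (0:ℝ) (0+1)))
      volume := AddCircle.measurePreserving_mk 1 0
  rw [zero_add] at hmk
  have hfcoe : ∀ x ∈ Ioc (0:ℝ) 1, f ↑x = Hc x := by
    intro x hx
    apply AddCircle.liftIoc_coe_apply
    rwa [zero_add]
  have hcomp : (fun x : ℝ => f ↑x) =ᵐ[μ] Hc := by
    filter_upwards [ae_restrict_mem measurableSet_Ioc] with x hx
    exact hfcoe x hx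
  have hf2 : MemLp f 2 (volume : Measure (AddCircle (1:ℝ))) := by
    rw [← hmk.map_eq]
    exact (memLp_map_measure_iff hfm.aestronglyMeasurable hmk.measurable.aemeasurable).2
      (hHc2.ae_eq hcomp.symm)
  have hvol : (volume : Measure (AddCircle (1:ℝ))) = AddCircle.haarAddCircle := by
    rw [AddCircle.volume_eq_smul_haarAddCircle]
    simp
  have hf2' : MemLp f 2 (AddCircle.haarAddCircle) := hvol ▸ hf2
  -- fourier coefficients of f vanish
  have hHae' : ∀ᵐ x ∂(volume : Measure ℝ), x ∈ uIoc (0:ℝ) 1 → ((H x : ℝ) : ℂ) = Hc x := by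
    have := (ae_restrict_iff' measurableSet_Ioc).mp hae
    filter_upwards [this] with x hx hx'
    rw [uIoc_of_le zero_le_one] at hx'
    simp [hHcdef, hx hx']
  have hcoeff : ∀ n : ℤ, fourierCoeff f n = 0 := by
    intro n
    rw [hfdef, fourierCoeff_liftIoc_eq, fourierCoeffOn_eq_integral]
    have hb : (0:ℝ) + 1 = 1 := zero_add 1
    rw [show ((0:ℝ) + 1 - 0) = 1 by norm_num, hb, show (1:ℝ)/1 = 1 by norm_num, one_smul]
    rw [← intervalIntegral.integral_congr_ae (by
      filter_upwards [hHae'] with x hx hx'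
      rw [← hx hx'])]
    exact hkey n
  -- conclude that f = 0 a.e.
  set F0 := hf2'.toLp f with hF0def
  have hrepr0 : fourierBasis.repr F0 = 0 := by
    ext n
    rw [fourierBasis_repr, hF0def, fourierCoeff_toLp' f hf2', hcoeff n]
    simp
  have hF00 : F0 = 0 := by
    have := (LinearIsometryEquiv.map_eq_zero_iff fourierBasis.repr).mp hrepr0
    exact this
  have hfae : f =ᵐ[AddCircle.haarAddCircle] 0 := by
    have h1 : ⇑F0 =ᵐ[AddCircle.haarAddCircle] f := hf2'.coeFn_toLp
    have h2 : ⇑F0 =ᵐ[AddCircle.haarAddCircle] 0 := by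
      rw [hF00]; exact Lp.coeFn_zero _ _ _
    exact h1.symm.trans h2
  have hfae' : f =ᵐ[(volume : Measure (AddCircle (1:ℝ)))] 0 := hvol ▸ hfae
  have hpull := Measure.QuasiMeasurePreserving.ae_eq_comp hmk.quasiMeasurePreserving hfae'
  have hHc0 : Hc =ᵐ[μ] 0 := by
    have : (fun x : ℝ => f ↑x) =ᵐ[μ] 0 := by
      filter_upwards [hpull] with x hx
      simpa using hx
    exact hcomp.symm.trans this
  filter_upwards [hae, hHc0] with x hx1 hx2
  have : (H' x : ℂ) = 0 := hx2
  rw [hx1]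
  exact_mod_cast this

theorem stmt17 (g : ℝ → ℝ)
    (hg : MemLp g 2 (volume.restrict (Ioo (0:ℝ) 1)))
    (G : ℝ → ℝ) (hG : ∀ x, G x = ∫ t in (0:ℝ)..x, g t) (hG1 : G 1 = 0)
    (h : ∀ z : ℂ, z ≠ 0 →
      ∫ x in (0:ℝ)..1,
        (g x : ℂ) * ((1 / z) * Complex.cos (z * (2 * x - 1))
          - Complex.sin (z * (2 * x - 1))) = 0) :
    ∀ᵐ x ∂(volume.restrict (Icc (0:ℝ) 1)),
      2 * G x - g x = 2 * G (1 - x) - g (1 - x) := by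
  have hrestr : volume.restrict (Ioo (0:ℝ) 1) = volume.restrict (Ioc (0:ℝ) 1) :=
    Measure.restrict_congr_set Ioo_ae_eq_Ioc
  set μ := volume.restrict (Ioc (0:ℝ) 1) with hμdef
  haveI : IsFiniteMeasure μ := ⟨by
    rw [hμdef, Measure.restrict_apply_univ]; simp [Real.volume_Ioc]⟩
  have hg2 : MemLp g 2 μ := hrestr ▸ hg
  have toII : ∀ f : ℝ → ℝ, MemLp f 2 μ → IntervalIntegrable f volume 0 1 := by
    intro f hf
    rw [intervalIntegrable_iff, uIoc_of_le zero_le_one]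
    exact memLp_one_iff_integrable.mp (hf.mono_exponent (by norm_num))
  have hgI : IntervalIntegrable g volume 0 1 := toII g hg2
  have hGc : ContinuousOn G (Icc 0 1) := by
    have hcont := intervalIntegral.continuousOn_primitive_interval' hgI
      (left_mem_uIcc (a := (0:ℝ)) (b := 1))
    rw [uIcc_of_le zero_le_one] at hcont
    exact hcont.congr fun x _ => hG x
  set F : ℝ → ℝ := fun x => 2 * G x - g x with hFdef
  have hA : ∀ c : ℝ, ∫ x in (0:ℝ)..1, F x * Real.sin (c * (2 * x - 1)) = 0 :=
    stepA' g G hgI hG hG1 hGc h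
  -- MemLp facts
  have hGm : MemLp G 2 μ := by
    obtain ⟨C, hC⟩ := isCompact_Icc.exists_bound_of_continuousOn hGc
    refine MemLp.of_bound ((hGc.mono Ioc_subset_Icc_self).aestronglyMeasurable
      measurableSet_Ioc) C ?_
    filter_upwards [ae_restrict_mem measurableSet_Ioc] with x hx
    exact hC x (Ioc_subset_Icc_self hx)
  have hF2 : MemLp F 2 μ := (hGm.const_mul 2).sub hg2
  have hmpr : MeasurePreserving (fun x : ℝ => 1 - x) volume volume := by
    have h1 : MeasurePreserving (fun x : ℝ => -x) volume volume :=
      Measure.measurePreserving_neg _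
    have h2 := measurePreserving_add_left (volume : Measure ℝ) 1
    have h3 := h2.comp h1
    have : ((fun x : ℝ => 1 + x) ∘ fun x : ℝ => -x) = fun x : ℝ => 1 - x := by
      funext x; simp [sub_eq_add_neg]
    rwa [this] at h3
  have hpre : (fun x : ℝ => 1 - x) ⁻¹' (Ioc 0 1) = Ico (0:ℝ) 1 := by
    ext x; simp only [mem_preimage, mem_Ioc, mem_Ico]
    constructor <;> (intro hx; constructor <;> linarith [hx.1, hx.2])
  have hmp : MeasurePreserving (fun x : ℝ => 1 - x) (volume.restrict (Ico (0:ℝ) 1)) μ := by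
    have h4 := hmpr.restrict_preimage (s := Ioc 0 1) measurableSet_Ioc
    rwa [hpre] at h4
  have hIco : volume.restrict (Ico (0:ℝ) 1) = μ := Measure.restrict_congr_set Ico_ae_eq_Ioc
  have hFr : MemLp (fun x => F (1 - x)) 2 μ := by
    have h5 : MemLp F 2 (Measure.map (fun x : ℝ => 1 - x) (volume.restrict (Ico (0:ℝ) 1))) := by
      rw [hmp.map_eq]; exact hF2
    have h6 := h5.comp_of_map (measurable_const.sub measurable_id).aemeasurable
    rw [hIco] at h6
    exact h6
  set H : ℝ → ℝ := fun x => F x - F (1 - x) with hHdef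
  have hH2 : MemLp H 2 μ := hF2.sub hFr
  have hHrefl : ∀ x : ℝ, H (1 - x) = - H x := by
    intro x
    show F (1 - x) - F (1 - (1 - x)) = -(F x - F (1 - x))
    rw [show (1 : ℝ) - (1 - x) = x by ring]
    ring
  have hFI : IntervalIntegrable F volume 0 1 := toII F hF2
  have hFrI : IntervalIntegrable (fun x => F (1 - x)) volume 0 1 := toII _ hFr
  have hHI : IntervalIntegrable H volume 0 1 := toII H hH2
  -- sine coefficients of F vanish
  have hFsin : ∀ n : ℤ, ∫ x in (0:ℝ)..1, F x * Real.sin (2 * Real.pi * n * x) = 0 := by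
    intro n
    rcases eq_or_ne n 0 with rfl | hn
    · simp
    have h0 := hA (Real.pi * n)
    have e : ∀ x : ℝ, F x * Real.sin ((Real.pi * n) * (2 * x - 1))
        = Real.cos (n * Real.pi) * (F x * Real.sin (2 * Real.pi * n * x)) := by
      intro x
      rw [show (Real.pi * n) * (2 * x - 1) = 2 * Real.pi * n * x - n * Real.pi by ring,
        Real.sin_sub, Real.sin_int_mul_pi]
      ring
    rw [intervalIntegral.integral_congr fun x _ => e x,
      intervalIntegral.integral_const_mul] at h0
    have hcosne : Real.cos (n * Real.pi) ≠ 0 := by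
      intro hcc
      have h7 := Real.sin_sq_add_cos_sq (n * Real.pi)
      rw [Real.sin_int_mul_pi, hcc] at h7; norm_num at h7
    exact (mul_eq_zero.mp h0).resolve_left hcosne
  -- cosine coefficients of H vanish
  have hHcos : ∀ n : ℤ, ∫ x in (0:ℝ)..1, H x * Real.cos (2 * Real.pi * n * x) = 0 := by
    intro n
    have hsub := intervalIntegral.integral_comp_sub_left (a := (0:ℝ)) (b := 1)
      (fun y => H y * Real.cos (2 * Real.pi * n * y)) 1
    norm_num at hsub
    have e : ∀ x : ℝ, H (1 - x) * Real.cos (2 * Real.pi * n * (1 - x))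
        = -(H x * Real.cos (2 * Real.pi * n * x)) := by
      intro x
      rw [hHrefl x, show 2 * Real.pi * (n:ℝ) * (1 - x) = (n:ℝ) * (2 * Real.pi) - 2 * Real.pi * n * x by ring,
        Real.cos_int_mul_two_pi_sub]
      ring
    rw [intervalIntegral.integral_congr fun x _ => e x, intervalIntegral.integral_neg] at hsub
    linarith [hsub]
  -- sine coefficients of H vanish
  have hHsin : ∀ n : ℤ, ∫ x in (0:ℝ)..1, H x * Real.sin (2 * Real.pi * n * x) = 0 := by
    intro n
    have hsincont : Continuous (fun x : ℝ => Real.sin (2 * Real.pi * n * x)) := by fun_prop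
    have hrefl2 : ∫ x in (0:ℝ)..1, F (1 - x) * Real.sin (2 * Real.pi * n * x)
        = - ∫ x in (0:ℝ)..1, F x * Real.sin (2 * Real.pi * n * x) := by
      have hsub := intervalIntegral.integral_comp_sub_left (a := (0:ℝ)) (b := 1)
        (fun y => F y * Real.sin (2 * Real.pi * n * (1 - y))) 1
      norm_num at hsub
      have e2 : ∀ y : ℝ, F y * Real.sin (2 * Real.pi * n * (1 - y))
          = -(F y * Real.sin (2 * Real.pi * n * y)) := by
        intro y
        rw [show 2 * Real.pi * (n:ℝ) * (1 - y) = (n:ℝ) * (2 * Real.pi) - 2 * Real.pi * n * y by ring,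
          Real.sin_int_mul_two_pi_sub]
        ring
      rw [hsub, intervalIntegral.integral_congr fun y _ => e2 y, intervalIntegral.integral_neg]
    have hsplit : ∫ x in (0:ℝ)..1, H x * Real.sin (2 * Real.pi * n * x)
        = (∫ x in (0:ℝ)..1, F x * Real.sin (2 * Real.pi * n * x))
          - ∫ x in (0:ℝ)..1, F (1 - x) * Real.sin (2 * Real.pi * n * x) := by
      rw [← intervalIntegral.integral_sub (hFI.mul_continuousOn hsincont.continuousOn)
        (hFrI.mul_continuousOn hsincont.continuousOn)]
      refine intervalIntegral.integral_congr fun x _ => ?_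
      show (F x - F (1 - x)) * _ = _
      ring
    rw [hsplit, hrefl2, hFsin n]
    ring
  -- conclude via Fourier theory
  have hH0 := fourier_vanish H hH2 hHI hHcos hHsin
  rw [show volume.restrict (Icc (0:ℝ) 1) = μ from
    (Measure.restrict_congr_set Ioc_ae_eq_Icc).symm]
  filter_upwards [hH0] with x hx
  have : F x = F (1 - x) := by
    have := sub_eq_zero.mp hx
    exact this
  simpa [hFdef] using this
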